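/- Fix α ∈ (0,1], an integer n ≥ 1, and b = σy² > 0. The function W : (0,∞) → ℝ defined by W(a) = −α(κ(a)²·a + (1−κ(a))²·b) − (1−α)·((n−1)/n)·κ(a)²·a, where κ(a) = α·b/(α·b + a), is strictly decreasing on (0,∞). -/
import Mathlib


/-- All else fixed, increasing the private-signal variance `a = σx²` (with the
equilibrium weight `κ` adjusting) strictly decreases expected utility. -/
theorem stmt8 (α : ℝ) (hα0 : 0 < α) (hα1 : α ≤ 1) (n : ℕ) (hn : 1 ≤ n)
    (b : ℝ) (hb : 0 < b)
    (κ : ℝ → ℝ) (hκ : ∀ a : ℝ, κ a = α * b / (α * b + a))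
    (W : ℝ → ℝ)
    (hW : ∀ a : ℝ, W a =
      -α * ((κ a) ^ 2 * a + (1 - κ a) ^ 2 * b) -
        (1 - α) * (((n : ℝ) - 1) / (n : ℝ)) * (κ a) ^ 2 * a) :
    StrictAntiOn W (Set.Ioi 0) := by
  intro x hx y hy hxy
  simp only [Set.mem_Ioi] at hx hy
  set c : ℝ := α * b with hc_def
  have hc : 0 < c := mul_pos hα0 hb
  have hn0 : (0:ℝ) < (n:ℝ) := by exact_mod_cast Nat.lt_of_lt_of_le Nat.zero_lt_one hn
  have hn1 : (1:ℝ) ≤ (n:ℝ) := by exact_mod_cast hn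
  set m : ℝ := ((n:ℝ) - 1) / (n:ℝ) with hm_def
  have hm0 : 0 ≤ m := div_nonneg (by linarith) hn0.le
  have hm1 : m ≤ 1 := by
    rw [hm_def, div_le_one hn0]; linarith
  set s : ℝ := α + (1 - α) * m with hs_def
  have hs0 : 0 < s := by nlinarith
  have hs1 : s ≤ 1 := by nlinarith
  have hform : ∀ a : ℝ, 0 < a → W a = -(c * a * (a + s * c)) / (c + a) ^ 2 := by
    intro a ha
    have hca : c + a ≠ 0 := by positivity
    have hca' : α * b + a ≠ 0 := by rw [← hc_def]; exact hca
    rw [hW, hκ, hs_def, hm_def]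
    field_simp
    ring
  rw [hform x hx, hform y hy]
  have hcx : (0:ℝ) < (c + x) ^ 2 := by positivity
  have hcy : (0:ℝ) < (c + y) ^ 2 := by positivity
  rw [div_lt_div_iff₀ hcy hcx, neg_mul, neg_mul, neg_lt_neg_iff]
  have key : 0 < c * (y - x) * ((2 - s) * (x * y) + c * (x + y) + s * c ^ 2) := by
    apply mul_pos (mul_pos hc (by linarith))
    have h1 : 0 < (2 - s) * (x * y) := by
      apply mul_pos (by linarith) (mul_pos hx hy)
    nlinarith [mul_pos hc (add_pos hx hy), mul_pos (mul_pos hs0 hc) hc]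
  nlinarith [key]
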